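/- If the pair (V,M) is a σ-smooth random variable on [0,1]², i.e., its distribution has density bounded by 1/σ with respect to Lebesgue measure, then the expected utility function b ↦ E[(V−b)·1{M ≤ b}] is (2/σ)-Lipschitz on [0,1]: for all x,y ∈ [0,1], |E[(V−y)1{M≤y}] − E[(V−x)1{M≤x}]| ≤ (2/σ)|y−x|. -/

import Mathlib

open MeasureTheory

/-- Lipschitzness of the expected utility under a σ-smooth distribution
(Lemma "Lipschitzness"). -/
theorem stmt_0 {Ω : Type*} [MeasurableSpace Ω] {P : MeasureTheory.Measure Ω} [IsProbabilityMeasure P]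
    (V M : Ω → ℝ) (hV : Measurable V) (hM : Measurable M)
    (hVr : ∀ ω, V ω ∈ Set.Icc (0:ℝ) 1) (hMr : ∀ ω, M ω ∈ Set.Icc (0:ℝ) 1)
    (σ : ℝ) (hσ : 0 < σ)
    (hsmooth : ∀ A : Set (ℝ × ℝ), MeasurableSet A →
      P {ω | (V ω, M ω) ∈ A} ≤ volume A / ENNReal.ofReal σ) :
    ∀ x ∈ Set.Icc (0:ℝ) 1, ∀ y ∈ Set.Icc (0:ℝ) 1,
      |(∫ ω, (V ω - y) * (if M ω ≤ y then 1 else 0) ∂P)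
        - (∫ ω, (V ω - x) * (if M ω ≤ x then 1 else 0) ∂P)| ≤ (2 / σ) * |y - x| := by
  -- measurability and integrability of the integrands
  have hmeas : ∀ c : ℝ, Measurable (fun ω => (V ω - c) * (if M ω ≤ c then (1:ℝ) else 0)) := by
    intro c
    exact (hV.sub measurable_const).mul
      (Measurable.ite (measurableSet_le hM measurable_const) measurable_const measurable_const)
  have hint : ∀ c ∈ Set.Icc (0:ℝ) 1,
      Integrable (fun ω => (V ω - c) * (if M ω ≤ c then (1:ℝ) else 0)) P := by
    intro c hc
    refine (integrable_const (1:ℝ)).mono' (hmeas c).aestronglyMeasurable ?_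
    filter_upwards with ω
    rcases hVr ω with ⟨h0, h1⟩
    have h2 : |V ω - c| ≤ 1 := by
      rw [abs_le]; constructor
      · linarith [hc.2]
      · linarith [hc.1]
    have h3 : |(if M ω ≤ c then (1:ℝ) else 0)| ≤ 1 := by split <;> norm_num
    calc ‖(V ω - c) * (if M ω ≤ c then (1:ℝ) else 0)‖
        = |V ω - c| * |(if M ω ≤ c then (1:ℝ) else 0)| := by rw [Real.norm_eq_abs, abs_mul]
      _ ≤ 1 * 1 := mul_le_mul h2 h3 (abs_nonneg _) (by norm_num)
      _ = 1 := by norm_num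
  -- σ ≤ 1
  have hσ1 : σ ≤ 1 := by
    have h := hsmooth (Set.Icc 0 1 ×ˢ Set.Icc 0 1) (measurableSet_Icc.prod measurableSet_Icc)
    have hset : {ω | (V ω, M ω) ∈ Set.Icc (0:ℝ) 1 ×ˢ Set.Icc (0:ℝ) 1} = Set.univ := by
      ext ω
      simp only [Set.mem_setOf_eq, Set.mem_prod, Set.mem_univ, iff_true]
      exact ⟨hVr ω, hMr ω⟩
    rw [hset, measure_univ] at h
    have hvol : volume (Set.Icc (0:ℝ) 1 ×ˢ Set.Icc (0:ℝ) 1) = 1 := by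
      rw [Measure.volume_eq_prod, Measure.prod_prod, Real.volume_Icc]
      norm_num
    rw [hvol] at h
    have h2 : (1:ENNReal) * ENNReal.ofReal σ ≤ 1 :=
      (ENNReal.le_div_iff_mul_le (Or.inr one_ne_zero) (Or.inr ENNReal.one_ne_top)).mp h
    rw [one_mul] at h2
    rwa [ENNReal.ofReal_le_one] at h2
  -- smoothness bound for M landing in an interval
  have hkey : ∀ x y : ℝ, x ≤ y → (P {ω | M ω ∈ Set.Ioc x y}).toReal ≤ (y - x) / σ := by
    intro x y hxy
    have h := hsmooth (Set.Icc 0 1 ×ˢ Set.Ioc x y) (measurableSet_Icc.prod measurableSet_Ioc)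
    have hset : {ω | (V ω, M ω) ∈ Set.Icc (0:ℝ) 1 ×ˢ Set.Ioc x y} = {ω | M ω ∈ Set.Ioc x y} := by
      ext ω
      simp only [Set.mem_setOf_eq, Set.mem_prod]
      exact and_iff_right (hVr ω)
    rw [hset] at h
    have hvol : volume (Set.Icc (0:ℝ) 1 ×ˢ Set.Ioc x y) = ENNReal.ofReal (y - x) := by
      rw [Measure.volume_eq_prod, Measure.prod_prod, Real.volume_Icc, Real.volume_Ioc]
      norm_num
    rw [hvol, ← ENNReal.ofReal_div_of_pos hσ] at h
    calc (P {ω | M ω ∈ Set.Ioc x y}).toReal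
        ≤ (ENNReal.ofReal ((y - x) / σ)).toReal :=
          ENNReal.toReal_mono ENNReal.ofReal_ne_top h
      _ = (y - x) / σ := ENNReal.toReal_ofReal (div_nonneg (by linarith) hσ.le)
  -- integral of the indicator
  have hind : ∀ x y : ℝ,
      ∫ ω, (if M ω ∈ Set.Ioc x y then (1:ℝ) else 0) ∂P
        = (P {ω | M ω ∈ Set.Ioc x y}).toReal := by
    intro x y
    have hs : MeasurableSet {ω | M ω ∈ Set.Ioc x y} := hM measurableSet_Ioc
    have : (fun ω => (if M ω ∈ Set.Ioc x y then (1:ℝ) else 0))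
        = Set.indicator {ω | M ω ∈ Set.Ioc x y} (fun _ => (1:ℝ)) := by
      ext ω; simp [Set.indicator_apply]
    rw [this, integral_indicator_const (1:ℝ) hs, smul_eq_mul, mul_one]
    rfl
  -- main estimate for x ≤ y
  have main : ∀ x ∈ Set.Icc (0:ℝ) 1, ∀ y ∈ Set.Icc (0:ℝ) 1, x ≤ y →
      |(∫ ω, (V ω - y) * (if M ω ≤ y then 1 else 0) ∂P)
        - (∫ ω, (V ω - x) * (if M ω ≤ x then 1 else 0) ∂P)| ≤ (2 / σ) * (y - x) := by
    intro x hx y hy hxy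
    set f : ℝ → Ω → ℝ := fun c ω => (V ω - c) * (if M ω ≤ c then (1:ℝ) else 0) with hf
    have hdiff : ∀ ω, |f y ω - f x ω|
        ≤ (if M ω ∈ Set.Ioc x y then (1:ℝ) else 0) + (y - x) := by
      intro ω
      rcases hVr ω with ⟨hv0, hv1⟩
      simp only [hf]
      by_cases h1 : M ω ≤ x
      · have h2 : M ω ≤ y := h1.trans hxy
        have h3 : M ω ∉ Set.Ioc x y := by
          simp only [Set.mem_Ioc, not_and_or, not_lt]; left; exact h1
        simp only [h1, h2, if_pos, h3, if_neg, not_false_iff, mul_one]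
        rw [show (V ω - y) - (V ω - x) = -(y - x) by ring, abs_neg,
          abs_of_nonneg (by linarith)]
        linarith
      · by_cases h2 : M ω ≤ y
        · have h3 : M ω ∈ Set.Ioc x y := ⟨lt_of_not_ge h1, h2⟩
          simp only [h1, h2, h3, if_pos, if_neg, not_false_iff, mul_one, mul_zero, sub_zero]
          rw [abs_le]
          constructor
          · have := hy.2; linarith
          · have := hy.1; linarith
        · have h3 : M ω ∉ Set.Ioc x y := by
            simp only [Set.mem_Ioc, not_and_or, not_le]; right; exact lt_of_not_ge h2
          simp only [h1, h2, h3, if_neg, not_false_iff, mul_zero, sub_zero, abs_zero]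
          linarith
    have hintg : Integrable (fun ω => (if M ω ∈ Set.Ioc x y then (1:ℝ) else 0) + (y - x)) P := by
      refine Integrable.add ?_ (integrable_const _)
      refine (integrable_const (1:ℝ)).mono'
        ((Measurable.ite (hM measurableSet_Ioc) measurable_const
          measurable_const).aestronglyMeasurable) ?_
      filter_upwards with ω
      rw [Real.norm_eq_abs]
      split <;> norm_num
    have hintfy := hint y hy
    have hintfx := hint x hx
    calc |(∫ ω, f y ω ∂P) - (∫ ω, f x ω ∂P)|
        = |∫ ω, (f y ω - f x ω) ∂P| := by rw [integral_sub hintfy hintfx]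
      _ ≤ ∫ ω, |f y ω - f x ω| ∂P := (by simpa using norm_integral_le_integral_norm (fun ω => f y ω - f x ω))
      _ ≤ ∫ ω, ((if M ω ∈ Set.Ioc x y then (1:ℝ) else 0) + (y - x)) ∂P := by
          refine integral_mono_of_nonneg ?_ hintg ?_
          · filter_upwards with ω; exact abs_nonneg _
          · filter_upwards with ω; exact hdiff ω
      _ = (P {ω | M ω ∈ Set.Ioc x y}).toReal + (y - x) := by
          rw [integral_add ?_ (integrable_const _), hind, integral_const,
            probReal_univ, smul_eq_mul, one_mul]
          refine (integrable_const (1:ℝ)).mono'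
            ((Measurable.ite (hM measurableSet_Ioc) measurable_const
              measurable_const).aestronglyMeasurable) ?_
          filter_upwards with ω
          rw [Real.norm_eq_abs]
          split <;> norm_num
      _ ≤ (y - x) / σ + (y - x) := by
          have := hkey x y hxy; linarith
      _ ≤ (2 / σ) * (y - x) := by
          have h1 : (y - x) ≤ (y - x) / σ := by
            rw [le_div_iff₀ hσ]
            nlinarith
          have h2 : (2 / σ) * (y - x) = (y - x) / σ + (y - x) / σ := by
            field_simp; ring
          linarith
  intro x hx y hy
  rcases le_total x y with h | h
  · rw [abs_of_nonneg (by linarith : (0:ℝ) ≤ y - x)]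
    exact main x hx y hy h
  · rw [abs_sub_comm, show |y - x| = x - y from by
      rw [abs_sub_comm]; exact abs_of_nonneg (by linarith)]
    exact main y hy x hx h
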